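/- arXiv:1704.02277 — 2 statements merged into one kernel-verified Lean document; each statement's English description precedes it below -/
import Mathlib

section
/- Let K ⊆ ℝ^n be compact, let μ be a finite positive Borel measure on ℝ^n whose support is contained in K, and let d ∈ ℕ. Then there exist an integer r ≤ C(n+d, n) + 1 (where C(n+d,n) is the number of multi-indices α ∈ ℕ^n with |α| ≤ d), points x^{(1)}, …, x^{(r)} ∈ K, and weights w₁, …, w_r ≥ 0 such that ∫ x^α dμ(x) = Σ_{j=1}^r w_j (x^{(j)})^α for every multi-index α with |α| ≤ d; i.e., the truncated moment sequence of μ admits a finitely atomic representing measure supported on K. -/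
open MeasureTheory

noncomputable section

/-- The monomial `x^α = ∏ i, x i ^ α i`. -/
def mono {n : ℕ} (x : Fin n → ℝ) (α : Fin n → ℕ) : ℝ := ∏ i, x i ^ α i

/-- The (topological) support of a measure. -/
def measureSupport {n : ℕ} (μ : Measure (Fin n → ℝ)) : Set (Fin n → ℝ) :=
  {x | ∀ U : Set (Fin n → ℝ), IsOpen U → x ∈ U → μ U ≠ 0}

/-- Card of a finset-sum of multisets. -/
lemma multiset_card_finset_sum {β α : Type*} (s : Finset β) (f : β → Multiset α) :
    Multiset.card (∑ x ∈ s, f x) = ∑ x ∈ s, Multiset.card (f x) := by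
  classical
  induction s using Finset.cons_induction with
  | empty => simp
  | cons a s ha ih => simp [Finset.sum_cons, ih]

/-- The convex hull of a compact set in a finite-dimensional normed space is compact. -/
lemma isCompact_convexHull_of_isCompact {E : Type*} [NormedAddCommGroup E] [NormedSpace ℝ E]
    [FiniteDimensional ℝ E] {s : Set E} (hs : IsCompact s) : IsCompact (convexHull ℝ s) := by
  rcases s.eq_empty_or_nonempty with h | ⟨x0, hx0⟩
  · simp [h]
  set N := Module.finrank ℝ E with hN
  have key : convexHull ℝ s =
      (fun p : (Fin (N + 1) → ℝ) × (Fin (N + 1) → E) => ∑ i, p.1 i • p.2 i) ''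
        ((stdSimplex ℝ (Fin (N + 1))) ×ˢ (Set.univ.pi fun _ => s)) := by
    apply Set.Subset.antisymm
    · intro x hx
      obtain ⟨ι', hfin, z, w, hzs, hai, hwpos, hwsum, hxeq⟩ :=
        eq_pos_convex_span_of_mem_convexHull hx
      letI := hfin
      have hcard : Fintype.card ι' ≤ N + 1 :=
        hai.card_le_finrank_succ.trans (Nat.add_le_add_right (Submodule.finrank_le _) 1)
      have hcardeq : Fintype.card (ι' ⊕ Fin (N + 1 - Fintype.card ι')) = N + 1 := by
        simp only [Fintype.card_sum, Fintype.card_fin]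
        omega
      let q := Fintype.equivFinOfCardEq hcardeq
      refine ⟨(Sum.elim w 0 ∘ q.symm, Sum.elim z (fun _ => x0) ∘ q.symm), ⟨?_, ?_⟩, ?_⟩
      · constructor
        · intro i
          rcases h : q.symm i with j | j <;> simp [h]
          exact (hwpos j).le
        · show ∑ i, Sum.elim w 0 (q.symm i) = 1
          rw [Equiv.sum_comp q.symm (Sum.elim w 0), Fintype.sum_sum_type]
          simp only [Sum.elim_inl, Sum.elim_inr, Pi.zero_apply, zero_smul, smul_zero, Finset.sum_const, add_zero]
          exact hwsum
      · intro i _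
        rcases h : q.symm i with j | j <;> simp [Function.comp, h]
        · exact hzs ⟨j, rfl⟩
        · exact hx0
      · show ∑ i, Sum.elim w 0 (q.symm i) • Sum.elim z (fun _ => x0) (q.symm i) = x
        rw [Equiv.sum_comp q.symm (fun j => Sum.elim w 0 j • Sum.elim z (fun _ => x0) j),
          Fintype.sum_sum_type]
        simp only [Sum.elim_inl, Sum.elim_inr, Pi.zero_apply, zero_smul, smul_zero, Finset.sum_const, add_zero]
        exact hxeq
    · rintro x ⟨⟨w, z⟩, ⟨hw, hz⟩, rfl⟩
      exact (convex_convexHull ℝ s).sum_mem (fun i _ => hw.1 i) hw.2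
        (fun i _ => subset_convexHull ℝ s (hz i (Set.mem_univ i)))
  rw [key]
  refine ((IsCompact.prod (isCompact_stdSimplex (𝕜 := ℝ) (ι := Fin (N + 1))) (isCompact_univ_pi fun _ => hs)).image ?_)
  exact continuous_finset_sum _ fun i _ =>
    ((continuous_apply i).comp continuous_fst).smul ((continuous_apply i).comp continuous_snd)

lemma measure_compl_measureSupport {n : ℕ} (μ : Measure (Fin n → ℝ)) :
    μ (measureSupport μ)ᶜ = 0 := by
  classical
  set B := TopologicalSpace.countableBasis (Fin n → ℝ) with hB
  have hBasis : TopologicalSpace.IsTopologicalBasis B :=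
    TopologicalSpace.isBasis_countableBasis _
  have hsub : (measureSupport μ)ᶜ ⊆ ⋃₀ {b ∈ B | μ b = 0} := by
    intro x hx
    simp only [measureSupport, Set.mem_compl_iff, Set.mem_setOf_eq, not_forall] at hx
    obtain ⟨U, hUo, hxU, hU0⟩ := hx
    rw [not_ne_iff] at hU0
    obtain ⟨b, hbB, hxb, hbU⟩ := hBasis.exists_subset_of_mem_open hxU hUo
    exact ⟨b, ⟨hbB, measure_mono_null hbU hU0⟩, hxb⟩
  refine measure_mono_null hsub ?_
  rw [measure_sUnion_null_iff ((TopologicalSpace.countable_countableBasis _).mono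
    (Set.sep_subset _ _))]
  exact fun u hu => hu.2

def symOfIdx (n d : ℕ) (β : {β : Fin n → Fin (d + 1) // (∑ i, (β i : ℕ)) ≤ d}) :
    Sym (Fin (n + 1)) d :=
  ⟨(∑ i, Multiset.replicate ((β.1 i : ℕ)) (Fin.castSucc i)) +
      Multiset.replicate (d - ∑ i, (β.1 i : ℕ)) (Fin.last n), by
    simp [Multiset.card_add, multiset_card_finset_sum]
    omega⟩

lemma card_multiindex_le (n d : ℕ) :
    Fintype.card {β : Fin n → Fin (d + 1) // (∑ i, (β i : ℕ)) ≤ d} ≤ (n + d).choose n := by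
  classical
  set f := symOfIdx n d with hf
  have hcount : ∀ (β : {β : Fin n → Fin (d + 1) // (∑ i, (β i : ℕ)) ≤ d}) (i : Fin n),
      Multiset.count (Fin.castSucc i) (f β).1 = (β.1 i : ℕ) := by
    intro β i
    simp only [hf, symOfIdx, Multiset.count_add, Multiset.count_sum', Multiset.count_replicate]
    rw [Finset.sum_eq_single i]
    · simp [(Fin.castSucc_lt_last i).ne']
    · intro j _ hji
      simp [Fin.castSucc_inj, hji]
    · simp
  have hinj : Function.Injective f := by
    intro β γ h
    have h' : (f β).1 = (f γ).1 := congrArg Subtype.val h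
    ext i
    have := (hcount β i).symm.trans (by rw [h', hcount γ i])
    exact this
  have h2 : Fintype.card (Sym (Fin (n + 1)) d) = (n + d).choose n := by
    rw [Sym.card_sym_eq_choose, Fintype.card_fin]
    rw [show n + 1 + d - 1 = n + d from by omega]
    rw [← Nat.choose_symm (Nat.le_add_right n d), Nat.add_sub_cancel_left]
  have h1 := Fintype.card_le_of_injective f hinj
  exact le_of_le_of_eq h1 h2

/-- If `K ⊆ ℝ^n` is compact, `μ` is a finite positive Borel measure with
support contained in `K`, and `d ∈ ℕ`, then there are `r ≤ C(n+d,n) + 1` points of `K`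
and nonnegative weights whose weighted power sums reproduce all moments of `μ` of degree
at most `d`; i.e. the truncated moment sequence of `μ` admits a finitely atomic
representing measure supported on `K`. -/
theorem finitely_atomic_representing_measure (n d : ℕ) (K : Set (Fin n → ℝ))
    (hK : IsCompact K) (μ : Measure (Fin n → ℝ)) [IsFiniteMeasure μ]
    (hsupp : measureSupport μ ⊆ K) :
    ∃ r : ℕ, r ≤ (n + d).choose n + 1 ∧
      ∃ (x : Fin r → (Fin n → ℝ)) (w : Fin r → ℝ),
        (∀ j, x j ∈ K) ∧ (∀ j, 0 ≤ w j) ∧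
        ∀ α : Fin n → ℕ, (∑ i, α i) ≤ d →
          ∫ v, mono v α ∂μ = ∑ j, w j * mono (x j) α := by
  classical
  by_cases hμ : μ = 0
  · refine ⟨0, Nat.zero_le _, fun j => j.elim0, fun j => j.elim0,
      fun j => j.elim0, fun j => j.elim0, ?_⟩
    intro α _
    simp [hμ]
  -- setup
  haveI : NeZero μ := ⟨hμ⟩
  set ι := {β : Fin n → Fin (d + 1) // (∑ i, (β i : ℕ)) ≤ d} with hι
  set F : (Fin n → ℝ) → (ι → ℝ) := fun v β => mono v (fun i => (β.1 i : ℕ)) with hF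
  have hFc : Continuous F := by
    refine continuous_pi fun β => ?_
    show Continuous fun v : Fin n → ℝ => ∏ i, v i ^ ((β.1 i : ℕ))
    exact continuous_finset_prod _ fun i _ => (continuous_apply i).pow _
  have hK0 : μ Kᶜ = 0 :=
    measure_mono_null (Set.compl_subset_compl.2 hsupp) (measure_compl_measureSupport μ)
  have haeK : ∀ᵐ v ∂μ, v ∈ K := by
    rw [ae_iff]
    exact hK0
  obtain ⟨C, hC⟩ := hK.exists_bound_of_continuousOn hFc.continuousOn
  have hint : Integrable F μ := by
    refine Integrable.mono' (integrable_const C) hFc.aestronglyMeasurable ?_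
    filter_upwards [haeK] with v hv using hC v hv
  have havg : (⨍ v, F v ∂μ) ∈ convexHull ℝ (F '' K) := by
    refine (convex_convexHull ℝ _).average_mem
      (isCompact_convexHull_of_isCompact (hK.image hFc)).isClosed ?_ hint
    filter_upwards [haeK] with v hv using subset_convexHull ℝ _ (Set.mem_image_of_mem F hv)
  obtain ⟨ι', hfin, z, w, hzs, hai, hwpos, hwsum, hxeq⟩ :=
    eq_pos_convex_span_of_mem_convexHull havg
  letI := hfin
  -- cardinality bound
  have hr : Fintype.card ι' ≤ (n + d).choose n + 1 := by
    have h1 : Fintype.card ι' ≤ Module.finrank ℝ (ι → ℝ) + 1 :=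
      hai.card_le_finrank_succ.trans (Nat.add_le_add_right (Submodule.finrank_le _) 1)
    have h2 : Module.finrank ℝ (ι → ℝ) = Fintype.card ι := Module.finrank_pi ℝ
    have h3 := card_multiindex_le n d
    exact h1.trans (Nat.add_le_add_right (h2.trans_le h3) 1)
  set r := Fintype.card ι' with hrdef
  set e := Fintype.equivFin ι' with he
  have hz' : ∀ i : ι', ∃ v, v ∈ K ∧ F v = z i := by
    intro i
    rcases hzs ⟨i, rfl⟩ with ⟨v, hv, hveq⟩
    exact ⟨v, hv, hveq⟩
  choose xs hxsK hxsF using hz'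
  set c := (μ Set.univ).toReal with hc
  have hc0 : c ≠ 0 := by
    rw [hc]
    exact ENNReal.toReal_ne_zero.2 ⟨Measure.measure_univ_ne_zero.2 hμ, measure_ne_top _ _⟩
  have hcpos : 0 ≤ c := ENNReal.toReal_nonneg
  have hintF : ∫ v, F v ∂μ = c • ⨍ v, F v ∂μ := by
    rw [average_eq, measureReal_def, ← hc, smul_inv_smul₀ hc0]
  refine ⟨r, hr, fun j => xs (e.symm j), fun j => c * w (e.symm j),
    fun j => hxsK _, fun j => mul_nonneg hcpos (hwpos _).le, ?_⟩
  intro α hα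
  have hαlt : ∀ i, α i < d + 1 := fun i =>
    Nat.lt_succ_of_le (le_trans (Finset.single_le_sum (fun i _ => Nat.zero_le (α i))
      (Finset.mem_univ i)) hα)
  set β : ι := ⟨fun i => ⟨α i, hαlt i⟩, by simpa using hα⟩ with hβ
  have hFβ : ∀ v, F v β = mono v α := fun v => rfl
  have step1 : ∫ v, mono v α ∂μ = (∫ v, F v ∂μ) β := by
    have := (ContinuousLinearMap.proj (R := ℝ) (φ := fun _ : ι => ℝ) β).integral_comp_comm hint
    simp only [ContinuousLinearMap.proj_apply] at this
    rw [← this]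
  rw [step1, hintF]
  have step2 : (c • ⨍ v, F v ∂μ) β = c * (∑ i, w i • z i) β := by
    rw [hxeq]
    simp [Pi.smul_apply]
  rw [step2, Finset.sum_apply]
  simp only [Pi.smul_apply, smul_eq_mul]
  calc c * ∑ i : ι', w i * z i β = ∑ i : ι', c * (w i * z i β) := by
        rw [Finset.mul_sum]
  _ = ∑ j : Fin r, c * (w (e.symm j) * z (e.symm j) β) :=
        (Equiv.sum_comp e.symm (fun i => c * (w i * z i β))).symm
  _ = ∑ j : Fin r, c * w (e.symm j) * mono (xs (e.symm j)) α := by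
        refine Finset.sum_congr rfl fun j _ => ?_
        rw [← hxsF (e.symm j), hFβ]
        ring
end
end

section
/- Let r ≥ 2 and let u^{(1)}, …, u^{(r)} ∈ ℝ⁴ be vectors with Σ_{k=1}^r Δ_{u^{(k)}} = 0 and such that Δ_{u^{(i)}} < 0 and Δ_{u^{(j)}} > 0 for some indices i ≠ j. Set X = Σ_{k=1}^r u^{(k)} (u^{(k)})ᵀ. Then there exist a weight w ≥ 0, a vector n ∈ ℝ⁴ with n₀ = 1 and n₁² + n₂² + n₃² = 1, and vectors ũ^{(1)}, …, ũ^{(r−1)} ∈ ℝ⁴ such that X = w · n nᵀ + Σ_{k=1}^{r−1} ũ^{(k)} (ũ^{(k)})ᵀ and Σ_{k=1}^{r−1} Δ_{ũ^{(k)}} = 0. -/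
open Matrix

noncomputable section

/-- For `u ∈ ℝ⁴`, `Δ_u := u₀² − u₁² − u₂² − u₃²`. -/
def Delta (u : Fin 4 → ℝ) : ℝ := u 0 ^ 2 - u 1 ^ 2 - u 2 ^ 2 - u 3 ^ 2

lemma vecMulVec_rot (a b : Fin 4 → ℝ) (c s : ℝ) (h : c^2 + s^2 = 1) :
    vecMulVec a a + vecMulVec b b =
      vecMulVec (c • a + s • b) (c • a + s • b) +
      vecMulVec ((-s) • a + c • b) ((-s) • a + c • b) := by
  ext x y
  simp only [Matrix.add_apply, vecMulVec_apply, Pi.add_apply, Pi.smul_apply, smul_eq_mul]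
  linear_combination (-(a x * a y) - b x * b y) * h

lemma Delta_rot (a b : Fin 4 → ℝ) (c s : ℝ) (h : c^2 + s^2 = 1) :
    Delta (c • a + s • b) + Delta ((-s) • a + c • b) = Delta a + Delta b := by
  simp only [Delta, Pi.add_apply, Pi.smul_apply, smul_eq_mul]
  linear_combination (a 0^2 - a 1^2 - a 2^2 - a 3^2 + b 0^2 - b 1^2 - b 2^2 - b 3^2) * h

lemma lightlike_decomp (m : Fin 4 → ℝ) (hm : Delta m = 0) :
    ∃ (w : ℝ) (n : Fin 4 → ℝ), 0 ≤ w ∧ n 0 = 1 ∧ n 1 ^ 2 + n 2 ^ 2 + n 3 ^ 2 = 1 ∧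
      vecMulVec m m = w • vecMulVec n n := by
  unfold Delta at hm
  by_cases h0 : m 0 = 0
  · refine ⟨0, ![1,1,0,0], le_refl 0, rfl, by change (1:ℝ) ^ 2 + (0:ℝ) ^ 2 + (0:ℝ) ^ 2 = 1; norm_num, ?_⟩
    have h1 : m 1 = 0 := by nlinarith [sq_nonneg (m 1), sq_nonneg (m 2), sq_nonneg (m 3)]
    have h2 : m 2 = 0 := by nlinarith [sq_nonneg (m 1), sq_nonneg (m 2), sq_nonneg (m 3)]
    have h3 : m 3 = 0 := by nlinarith [sq_nonneg (m 1), sq_nonneg (m 2), sq_nonneg (m 3)]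
    have hz : ∀ x : Fin 4, m x = 0 := by
      intro x; fin_cases x <;> assumption
    ext x y
    simp [vecMulVec_apply, hz]
  · refine ⟨(m 0)^2, (m 0)⁻¹ • m, sq_nonneg _, by simp [h0], ?_, ?_⟩
    · simp only [Pi.smul_apply, smul_eq_mul]
      field_simp
      linarith
    · ext x y
      simp only [vecMulVec_apply, Matrix.smul_apply, Pi.smul_apply, smul_eq_mul]
      field_simp

lemma sum_replace {M : Type*} [AddCommGroup M] {r : ℕ} (u : Fin r → Fin 4 → ℝ)
    (i j : Fin r) (hij : i ≠ j) (b' : Fin 4 → ℝ)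
    (e : {x : Fin r // x ≠ i} ≃ Fin (r-1)) (F : (Fin 4 → ℝ) → M) :
    ∑ k : Fin (r-1), F (Function.update u j b' (e.symm k : Fin r)) =
      ∑ k, F (u k) - F (u i) + (F b' - F (u j)) := by
  classical
  rw [Equiv.sum_comp e.symm (fun x : {x : Fin r // x ≠ i} => F (Function.update u j b' (x : Fin r)))]
  rw [← Finset.sum_subtype (Finset.univ.erase i)
      (fun x => by simp [Finset.mem_erase]) (fun x => F (Function.update u j b' x))]
  rw [Finset.sum_erase_eq_sub (Finset.mem_univ i)]
  have hupd : ∀ x, F (Function.update u j b' x)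
      = Function.update (fun x => F (u x)) j (F b') x := by
    intro x
    by_cases hx : x = j
    · subst hx; simp
    · simp [Function.update_of_ne hx]
  rw [Function.update_of_ne (Ne.symm (fun h => hij h.symm)) , ]
  simp only [hupd]
  rw [Finset.sum_update_of_mem (Finset.mem_univ j)]
  rw [Finset.sum_sdiff_eq_sub (Finset.subset_univ {j}), Finset.sum_singleton]
  abel

/-- if `r ≥ 2`, `Σ_k Δ_{u^{(k)}} = 0` and some `Δ_{u^{(i)}} < 0`,
`Δ_{u^{(j)}} > 0` with `i ≠ j`, then `X = Σ_k u^{(k)} (u^{(k)})ᵀ` can be rewritten as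
`w · n nᵀ` (with `w ≥ 0`, `n₀ = 1` and unit Bloch vector) plus a sum of `r − 1`
rank-one terms `ũ^{(k)} (ũ^{(k)})ᵀ` with `Σ_k Δ_{ũ^{(k)}} = 0`. -/
theorem rank_reduction_step (r : ℕ) (hr : 2 ≤ r) (u : Fin r → Fin 4 → ℝ)
    (hsum : ∑ k, Delta (u k) = 0)
    (i j : Fin r) (hij : i ≠ j)
    (hi : Delta (u i) < 0) (hj : 0 < Delta (u j)) :
    ∃ (w : ℝ) (n : Fin 4 → ℝ) (v : Fin (r - 1) → Fin 4 → ℝ),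
      0 ≤ w ∧ n 0 = 1 ∧ (n 1) ^ 2 + (n 2) ^ 2 + (n 3) ^ 2 = 1 ∧
      (∑ k, vecMulVec (u k) (u k)) = w • vecMulVec n n + ∑ k, vecMulVec (v k) (v k) ∧
      ∑ k, Delta (v k) = 0 := by
  classical
  -- find the angle
  obtain ⟨θ, hθ⟩ : ∃ θ, Delta (Real.cos θ • u i + Real.sin θ • u j) = 0 := by
    set f : ℝ → ℝ := fun θ => Delta (Real.cos θ • u i + Real.sin θ • u j) with hf
    have hcont : Continuous f := by
      simp only [hf, Delta, Pi.add_apply, Pi.smul_apply, smul_eq_mul]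
      fun_prop
    have h0 : f 0 = Delta (u i) := by simp [hf, Delta]
    have h1 : f (Real.pi/2) = Delta (u j) := by simp [hf, Delta]
    have hsub := intermediate_value_Icc (by positivity : (0:ℝ) ≤ Real.pi/2)
      hcont.continuousOn
    have : (0:ℝ) ∈ Set.Icc (f 0) (f (Real.pi/2)) := by
      rw [h0, h1]; exact ⟨le_of_lt hi, le_of_lt hj⟩
    obtain ⟨θ, _, hθ⟩ := hsub this
    exact ⟨θ, hθ⟩
  set c := Real.cos θ
  set s := Real.sin θ
  have hcs : c^2 + s^2 = 1 := by
    simpa [c, s] using Real.cos_sq_add_sin_sq θ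
  set a' := c • u i + s • u j with ha'
  set b' := (-s) • u i + c • u j with hb'
  have hDb' : Delta b' = Delta (u i) + Delta (u j) := by
    have := Delta_rot (u i) (u j) c s hcs
    rw [← ha', ← hb'] at this
    linarith [hθ]
  obtain ⟨w, n, hw, hn0, hn1, hM⟩ := lightlike_decomp a' hθ
  have hcard : Fintype.card {x : Fin r // x ≠ i} = r - 1 := by
    rw [Fintype.card_subtype]
    simp [Finset.filter_ne']
  set e : {x : Fin r // x ≠ i} ≃ Fin (r-1) := Fintype.equivFinOfCardEq hcard
  refine ⟨w, n, fun k => Function.update u j b' (e.symm k : Fin r), hw, hn0, hn1, ?_, ?_⟩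
  · rw [sum_replace u i j hij b' e (fun x => vecMulVec x x)]
    have hrot := vecMulVec_rot (u i) (u j) c s hcs
    rw [← ha', ← hb'] at hrot
    rw [hM] at hrot
    have : vecMulVec (u i) (u i) + vecMulVec (u j) (u j)
        = w • vecMulVec n n + vecMulVec b' b' := hrot
    abel_nf
    abel_nf at this
    linear_combination (norm := abel) this
  · rw [sum_replace u i j hij b' e Delta]
    rw [hsum, hDb']
    ring
end
end
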